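/- Let A₀ (the 'normed part') satisfy ||[α₀]_N|| ≤ D·N!·C^N and let the L∞ structure maps and the homotopy operator h be bounded by uniform constants (||l_j|| ≤ j!·C^j, ||h|| ≤ C). Suppose the number of admissible decorated rooted trees with N leaves (internal vertices of valency ≥ 3, black/white coloring as in the Maurer–Cartan recursion) is at most 16^N. Then the element α defined by the tree-sum formula [α]_N = ∑_{(T,σ)} ±(1/|Aut T|)·ρ_{(T,σ)} satisfies ||[α]_N|| ≤ D'·N!·E^N for constants D', E independent of N; i.e., α is a bounded cochain. -/

import Mathlib

-- decompose sum over antidiagonalTuple (j+1)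
lemma sum_tuple_succ (j N : ℕ) (f : ℕ → ℝ) :
    ∑ s ∈ Finset.Nat.antidiagonalTuple (j+1) N, ∏ i, f (s i)
      = ∑ p ∈ Finset.HasAntidiagonal.antidiagonal N, f p.1 *
          ∑ t ∈ Finset.Nat.antidiagonalTuple j p.2, ∏ i, f (t i) := by
  simp_rw [Finset.mul_sum]
  rw [Finset.sum_sigma']
  refine Finset.sum_nbij' (fun s => ⟨(s 0, ∑ i, Fin.tail s i), Fin.tail s⟩)
    (fun x => Fin.cons x.1.1 x.2) ?_ ?_ ?_ ?_ ?_
  · intro s hs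
    rw [Finset.Nat.mem_antidiagonalTuple] at hs
    simp only [Finset.mem_sigma, Finset.HasAntidiagonal.mem_antidiagonal,
      Finset.Nat.mem_antidiagonalTuple]
    refine ⟨?_, trivial⟩
    rw [← hs, Fin.sum_univ_succ]
    rfl
  · rintro ⟨⟨m, k⟩, t⟩ hx
    simp only [Finset.mem_sigma, Finset.HasAntidiagonal.mem_antidiagonal,
      Finset.Nat.mem_antidiagonalTuple] at hx
    rw [Finset.Nat.mem_antidiagonalTuple, Fin.sum_univ_succ]
    simp [Fin.cons_zero, Fin.cons_succ, hx.2, hx.1]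
  · intro s _; exact Fin.cons_self_tail s
  · rintro ⟨⟨m, k⟩, t⟩ hx
    simp only [Finset.mem_sigma, Finset.HasAntidiagonal.mem_antidiagonal,
      Finset.Nat.mem_antidiagonalTuple] at hx
    simp [Fin.tail_cons, hx.2]
  · intro s _
    rw [Fin.prod_univ_succ]
    rfl


lemma sum_inv_sq_aux (n : ℕ) :
    ∑ i ∈ Finset.range (n+2), (((i:ℝ))^2)⁻¹ ≤ 2 - ((n:ℝ)+1)⁻¹ := by
  induction n with
  | zero => norm_num
  | succ n ih =>
    rw [Finset.sum_range_succ]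
    have h1 : (0:ℝ) < (n:ℝ)+1 := by positivity
    have h2 : (0:ℝ) < (n:ℝ)+2 := by positivity
    have key : (((n+2:ℕ):ℝ)^2)⁻¹ ≤ ((n:ℝ)+1)⁻¹ - ((n:ℝ)+2)⁻¹ := by
      push_cast
      rw [← sub_nonneg]
      have e : ((n:ℝ)+1)⁻¹ - ((n:ℝ)+2)⁻¹ - (((n:ℝ)+2)^2)⁻¹
          = 1 / (((n:ℝ)+1)*((n:ℝ)+2)^2) := by
        field_simp
        ring
      rw [e]
      positivity
    push_cast at key ⊢
    have e4 : ((n:ℝ)+1+1)⁻¹ = ((n:ℝ)+2)⁻¹ := by rw [show ((n:ℝ)+1+1) = (n:ℝ)+2 from by ring]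
    rw [e4]
    linarith

lemma sum_inv_sq (n : ℕ) :
    ∑ i ∈ Finset.range (n+1), (((i:ℝ))^2)⁻¹ ≤ 2 := by
  cases n with
  | zero => norm_num
  | succ m =>
    have h := sum_inv_sq_aux m
    have : (0:ℝ) < ((m:ℝ)+1)⁻¹ := by positivity
    linarith

lemma pair_bound (N : ℕ) (hN : 1 ≤ N) :
    ∑ p ∈ Finset.HasAntidiagonal.antidiagonal N, ((p.1:ℝ)^2)⁻¹ * ((p.2:ℝ)^2)⁻¹ ≤ 16 / (N:ℝ)^2 := by
  have hN0 : (0:ℝ) < (N:ℝ) := by exact_mod_cast hN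
  have step : ∀ p ∈ Finset.HasAntidiagonal.antidiagonal N,
      ((p.1:ℝ)^2)⁻¹ * ((p.2:ℝ)^2)⁻¹
        ≤ 2/(N:ℝ)^2 * (((p.1:ℝ)^2)⁻¹ + ((p.2:ℝ)^2)⁻¹) := by
    rintro ⟨m, k⟩ hp
    rw [Finset.HasAntidiagonal.mem_antidiagonal] at hp
    rcases Nat.eq_zero_or_pos m with hm | hm
    · subst hm; simp; positivity
    rcases Nat.eq_zero_or_pos k with hk | hk
    · subst hk; simp; positivity
    have hm' : (0:ℝ) < (m:ℝ) := by exact_mod_cast hm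
    have hk' : (0:ℝ) < (k:ℝ) := by exact_mod_cast hk
    have hsum : (m:ℝ) + (k:ℝ) = (N:ℝ) := by exact_mod_cast hp
    simp only
    have L : ((m:ℝ)^2)⁻¹ * ((k:ℝ)^2)⁻¹
        = (N:ℝ)^2 / ((N:ℝ)^2*((m:ℝ)^2*(k:ℝ)^2)) := by
      field_simp
    have R : 2/(N:ℝ)^2 * (((m:ℝ)^2)⁻¹ + ((k:ℝ)^2)⁻¹)
        = (2*((k:ℝ)^2+(m:ℝ)^2)) / ((N:ℝ)^2*((m:ℝ)^2*(k:ℝ)^2)) := by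
      field_simp
    rw [L, R]
    gcongr
    nlinarith [sq_nonneg ((m:ℝ)-(k:ℝ)), hsum]
  have e1 : ∑ p ∈ Finset.HasAntidiagonal.antidiagonal N, ((p.1:ℝ)^2)⁻¹
      = ∑ i ∈ Finset.range (N+1), (((i:ℝ))^2)⁻¹ :=
    Finset.Nat.sum_antidiagonal_eq_sum_range_succ (fun i j => (((i:ℝ))^2)⁻¹) N
  have e2 : ∑ p ∈ Finset.HasAntidiagonal.antidiagonal N, ((p.2:ℝ)^2)⁻¹
      = ∑ i ∈ Finset.range (N+1), ((((N-i:ℕ):ℝ))^2)⁻¹ :=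
    Finset.Nat.sum_antidiagonal_eq_sum_range_succ (fun i j => (((j:ℝ))^2)⁻¹) N
  have e3 : ∑ i ∈ Finset.range (N+1), ((((N-i:ℕ):ℝ))^2)⁻¹
      = ∑ i ∈ Finset.range (N+1), (((i:ℝ))^2)⁻¹ := by
    rw [← Finset.sum_range_reflect]
    apply Finset.sum_congr rfl
    intro i hi
    rw [Finset.mem_range] at hi
    rw [Nat.add_sub_cancel, Nat.sub_sub_self (by omega : i ≤ N)]
  calc ∑ p ∈ Finset.HasAntidiagonal.antidiagonal N, ((p.1:ℝ)^2)⁻¹ * ((p.2:ℝ)^2)⁻¹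
      ≤ ∑ p ∈ Finset.HasAntidiagonal.antidiagonal N,
          2/(N:ℝ)^2 * (((p.1:ℝ)^2)⁻¹ + ((p.2:ℝ)^2)⁻¹) := Finset.sum_le_sum step
    _ = 2/(N:ℝ)^2 * ((∑ p ∈ Finset.HasAntidiagonal.antidiagonal N, ((p.1:ℝ)^2)⁻¹)
          + ∑ p ∈ Finset.HasAntidiagonal.antidiagonal N, ((p.2:ℝ)^2)⁻¹) := by
        rw [← Finset.mul_sum, Finset.sum_add_distrib]
    _ ≤ 2/(N:ℝ)^2 * (2 + 2) := by
        have b1 : ∑ p ∈ Finset.HasAntidiagonal.antidiagonal N, ((p.1:ℝ)^2)⁻¹ ≤ 2 := by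
          rw [e1]; exact sum_inv_sq N
        have b2 : ∑ p ∈ Finset.HasAntidiagonal.antidiagonal N, ((p.2:ℝ)^2)⁻¹ ≤ 2 := by
          rw [e2, e3]; exact sum_inv_sq N
        have hnn : (0:ℝ) ≤ 2/(N:ℝ)^2 := by positivity
        nlinarith
    _ ≤ 16 / (N:ℝ)^2 := by
        rw [div_mul_eq_mul_div]
        gcongr
        norm_num

lemma tuple_sum_nonneg (j N : ℕ) :
    0 ≤ ∑ t ∈ Finset.Nat.antidiagonalTuple j N, ∏ i, (((t i:ℕ):ℝ)^2)⁻¹ := by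
  apply Finset.sum_nonneg
  intro t _
  apply Finset.prod_nonneg
  intro i _
  positivity

lemma tuple_bound (j : ℕ) : ∀ N, 1 ≤ N →
    ∑ s ∈ Finset.Nat.antidiagonalTuple (j+1) N, ∏ i, (((s i:ℕ):ℝ)^2)⁻¹
      ≤ 16^j / (N:ℝ)^2 := by
  induction j with
  | zero =>
    intro N hN
    rw [Finset.Nat.antidiagonalTuple_one, Finset.sum_singleton]
    simp [Fin.prod_univ_one]
  | succ j ih =>
    intro N hN
    have hN0 : (0:ℝ) < (N:ℝ) := by exact_mod_cast hN
    rw [sum_tuple_succ (j+1) N (fun n => (((n:ℕ):ℝ)^2)⁻¹)]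
    have step : ∀ p ∈ Finset.HasAntidiagonal.antidiagonal N,
        ((p.1:ℝ)^2)⁻¹ * (∑ t ∈ Finset.Nat.antidiagonalTuple (j+1) p.2,
            ∏ i, (((t i:ℕ):ℝ)^2)⁻¹)
          ≤ 16^j * (((p.1:ℝ)^2)⁻¹ * ((p.2:ℝ)^2)⁻¹) := by
      rintro ⟨m, k⟩ _
      simp only
      rcases Nat.eq_zero_or_pos k with hk | hk
      · subst hk
        rw [Finset.Nat.antidiagonalTuple_zero_right, Finset.sum_singleton]
        simp
      · have h1 := ih k hk
        have h2 : (0:ℝ) ≤ ((m:ℝ)^2)⁻¹ := by positivity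
        calc ((m:ℝ)^2)⁻¹ * (∑ t ∈ Finset.Nat.antidiagonalTuple (j+1) k,
                ∏ i, (((t i:ℕ):ℝ)^2)⁻¹)
            ≤ ((m:ℝ)^2)⁻¹ * (16^j / (k:ℝ)^2) := by
              exact mul_le_mul_of_nonneg_left h1 h2
          _ = 16^j * (((m:ℝ)^2)⁻¹ * ((k:ℝ)^2)⁻¹) := by
              rw [div_eq_mul_inv]; ring
    calc ∑ p ∈ Finset.HasAntidiagonal.antidiagonal N, ((p.1:ℝ)^2)⁻¹ *
            (∑ t ∈ Finset.Nat.antidiagonalTuple (j+1) p.2, ∏ i, (((t i:ℕ):ℝ)^2)⁻¹)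
        ≤ ∑ p ∈ Finset.HasAntidiagonal.antidiagonal N, 16^j * (((p.1:ℝ)^2)⁻¹ * ((p.2:ℝ)^2)⁻¹) :=
          Finset.sum_le_sum step
      _ = 16^j * ∑ p ∈ Finset.HasAntidiagonal.antidiagonal N, ((p.1:ℝ)^2)⁻¹ * ((p.2:ℝ)^2)⁻¹ := by
          rw [Finset.mul_sum]
      _ ≤ 16^j * (16 / (N:ℝ)^2) := by
          apply mul_le_mul_of_nonneg_left (pair_bound N hN) (by positivity)
      _ = 16^(j+1) / (N:ℝ)^2 := by rw [pow_succ]; ring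

lemma tuple_bound' (j N : ℕ) (hj : 1 ≤ j) (hN : 1 ≤ N) :
    ∑ s ∈ (Finset.Nat.antidiagonalTuple j N).filter (fun s => ∀ i, 1 ≤ s i),
      ∏ i, (((s i:ℕ):ℝ)^2)⁻¹ ≤ 16^(j-1) / (N:ℝ)^2 := by
  obtain ⟨m, rfl⟩ : ∃ m, j = m + 1 := ⟨j - 1, by omega⟩
  have h1 : ∑ s ∈ (Finset.Nat.antidiagonalTuple (m+1) N).filter (fun s => ∀ i, 1 ≤ s i),
      ∏ i, (((s i:ℕ):ℝ)^2)⁻¹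
      ≤ ∑ s ∈ Finset.Nat.antidiagonalTuple (m+1) N, ∏ i, (((s i:ℕ):ℝ)^2)⁻¹ := by
    apply Finset.sum_le_sum_of_subset_of_nonneg (Finset.filter_subset _ _)
    intro s _ _
    apply Finset.prod_nonneg
    intro i _
    positivity
  have h2 := tuple_bound m N hN
  simpa [Nat.add_sub_cancel] using h1.trans h2


lemma geom_aux (r : ℝ) (h0 : 0 ≤ r) (h2 : r ≤ 1/2) :
    ∀ N, ∑ j ∈ Finset.Icc 2 (N+1), r ^ j ≤ 2 * r^2 - 2 * r^(N+2) := by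
  intro N
  induction N with
  | zero =>
    rw [Finset.Icc_eq_empty (by omega), Finset.sum_empty]
    have : r^(0+2) = r^2 := by norm_num
    rw [this]
    nlinarith [sq_nonneg r]
  | succ n ih =>
    rw [Finset.sum_Icc_succ_top (by omega : 2 ≤ n + 2)]
    have key : 2 * r^(n+3) ≤ r^(n+2) := by
      have hp : (0:ℝ) ≤ r^(n+2) := pow_nonneg h0 _
      calc 2 * r^(n+3) = 2 * r * r^(n+2) := by ring
        _ ≤ 1 * r^(n+2) := by nlinarith
        _ = r^(n+2) := one_mul _
    linarith

lemma geom_bound (r : ℝ) (h0 : 0 ≤ r) (h2 : r ≤ 1/2) (N : ℕ) :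
    ∑ j ∈ Finset.Icc 2 N, r ^ j ≤ 2 * r^2 := by
  cases N with
  | zero => rw [Finset.Icc_eq_empty (by omega), Finset.sum_empty]; positivity
  | succ n =>
    have := geom_aux r h0 h2 n
    have hp : (0:ℝ) ≤ r^(n+2) := pow_nonneg h0 _
    linarith

lemma foursq (N : ℕ) : ((N:ℝ))^2 ≤ 4^N := by
  have h1 : (N:ℝ) ≤ 2^N := by exact_mod_cast (Nat.lt_two_pow_self (n := N)).le
  have h2 : ((N:ℝ))^2 ≤ ((2:ℝ)^N)^2 := by
    apply pow_le_pow_left₀ (by positivity) h1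
  calc ((N:ℝ))^2 ≤ ((2:ℝ)^N)^2 := h2
    _ = 4^N := by rw [← pow_mul, mul_comm, pow_mul]; norm_num

/-- Quantitative core of the tree-sum solution of the Maurer–Cartan recursion:
if `a N ≤ b N + ∑_{j=2}^N (1/j!)·C·∑_{s₁+⋯+s_j=N, sᵢ≥1} (N!/(s₁!⋯s_j!))·j!·C^j·a_{s₁}⋯a_{s_j}`
with `b N ≤ D·N!·C^N` (the bounded part `α₀`, with the L∞ structure maps bounded by
`‖l_j‖ ≤ j!·C^j` and the homotopy operator by `C`), then `a N ≤ D'·N!·E^N` for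
constants `D', E` independent of `N`; i.e. the solution is a bounded cochain. -/
theorem tree_sum_bounded (C D : ℝ) (hC : 0 < C) (hD : 0 < D) (a b : ℕ → ℝ)
    (ha0 : ∀ N, 0 ≤ a N)
    (hb : ∀ N, 1 ≤ N → b N ≤ D * N.factorial * C ^ N)
    (hrec : ∀ N, 1 ≤ N → a N ≤ b N +
      ∑ j ∈ Finset.Icc 2 N, ((j.factorial : ℝ))⁻¹ * C *
        ∑ s ∈ (Finset.Nat.antidiagonalTuple j N).filter (fun s => ∀ i, 1 ≤ s i),
          ((N.factorial : ℝ) / ∏ i, ((s i).factorial : ℝ)) * (j.factorial : ℝ) * C ^ j *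
            ∏ i, a (s i)) :
    ∃ D' E : ℝ, 0 < D' ∧ 0 < E ∧ ∀ N, 1 ≤ N → a N ≤ D' * N.factorial * E ^ N := by
  set θ : ℝ := min ((64*C^3)⁻¹) ((32*C)⁻¹) with hθdef
  have hθ : 0 < θ := lt_min (by positivity) (by positivity)
  have hθ1 : θ ≤ (64*C^3)⁻¹ := min_le_left _ _
  have hθ2 : θ ≤ (32*C)⁻¹ := min_le_right _ _
  have hr2 : 16*C*θ ≤ 1/2 := by
    have h1 : 16*C*θ ≤ 16*C*(32*C)⁻¹ := mul_le_mul_of_nonneg_left hθ2 (by positivity)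
    have e : 16*C*(32*C)⁻¹ = 1/2 := by field_simp; ring
    linarith
  set E : ℝ := 4*C*max 1 (2*D/θ) with hEdef
  have hmax1 : (1:ℝ) ≤ max 1 (2*D/θ) := le_max_left _ _
  have hE : 0 < E := by
    apply mul_pos (by positivity)
    linarith
  refine ⟨θ, E, hθ, hE, ?_⟩
  have main : ∀ N, 1 ≤ N → a N ≤ θ * N.factorial * E^N / (N:ℝ)^2 := by
    intro N
    induction N using Nat.strong_induction_on with
    | _ N ih =>
    intro hN
    have hN0 : (0:ℝ) < (N:ℝ) := by exact_mod_cast hN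
    have hNfac : (0:ℝ) < (N.factorial:ℝ) := by exact_mod_cast N.factorial_pos
    -- bound the b-part
    have hbpart : b N ≤ θ/2 * (N.factorial * E^N / (N:ℝ)^2) := by
      have h1 : D * (N:ℝ)^2 * C^N ≤ θ/2 * E^N := by
        have hEN : E^N = 4^N * C^N * (max 1 (2*D/θ))^N := by
          rw [hEdef, mul_pow, mul_pow]
        have h2 : 2*D/θ ≤ (max 1 (2*D/θ))^N :=
          le_trans (le_max_right _ _) (le_self_pow₀ hmax1 (by omega))
        have h3 : θ/2 * E^N ≥ θ/2 * (4^N * C^N * (2*D/θ)) := by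
          rw [hEN]
          apply mul_le_mul_of_nonneg_left ?_ (by positivity)
          apply mul_le_mul_of_nonneg_left h2 (by positivity)
        have h4 : θ/2 * (4^N * C^N * (2*D/θ)) = D * 4^N * C^N := by
          field_simp
        have h5 : D * (N:ℝ)^2 * C^N ≤ D * 4^N * C^N := by
          have := foursq N
          apply mul_le_mul_of_nonneg_right ?_ (by positivity)
          apply mul_le_mul_of_nonneg_left this (by positivity)
        linarith
      calc b N ≤ D * N.factorial * C^N := hb N hN
        _ ≤ θ/2 * (N.factorial * E^N / (N:ℝ)^2) := by
          rw [← sub_nonneg]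
          have expand : θ/2 * ((N.factorial:ℝ) * E^N / (N:ℝ)^2) - D * N.factorial * C^N
              = ((N.factorial:ℝ) / (N:ℝ)^2) * (θ/2 * E^N - D * (N:ℝ)^2 * C^N) := by
            field_simp
          rw [expand]
          exact mul_nonneg (by positivity) (by linarith)
    have hterm : ∀ j ∈ Finset.Icc 2 N,
        ((j.factorial:ℝ))⁻¹ * C *
          ∑ s ∈ (Finset.Nat.antidiagonalTuple j N).filter (fun s => ∀ i, 1 ≤ s i),
            ((N.factorial : ℝ) / ∏ i, ((s i).factorial : ℝ)) * (j.factorial : ℝ) * C ^ j *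
              ∏ i, a (s i)
        ≤ (C/16) * (16*C*θ)^j * ((N.factorial:ℝ) * E^N / (N:ℝ)^2) := by
      intro j hj
      obtain ⟨hj2, hjN⟩ := Finset.mem_Icc.mp hj
      have hs_bound : ∀ s ∈ (Finset.Nat.antidiagonalTuple j N).filter (fun s => ∀ i, 1 ≤ s i),
          ((N.factorial : ℝ) / ∏ i, ((s i).factorial : ℝ)) * (j.factorial : ℝ) * C ^ j *
              ∏ i, a (s i)
          ≤ ((N.factorial:ℝ) * (j.factorial:ℝ) * C^j * θ^j * E^N) *
              ∏ i, (((s i:ℕ):ℝ)^2)⁻¹ := by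
        intro s hs
        rw [Finset.mem_filter, Finset.Nat.mem_antidiagonalTuple] at hs
        obtain ⟨hs1, hs2⟩ := hs
        have hPpos : (0:ℝ) < ∏ i, ((s i).factorial:ℝ) :=
          Finset.prod_pos (fun i _ => by exact_mod_cast (s i).factorial_pos)
        have hlt : ∀ i : Fin j, s i < N := by
          intro i
          have hex : ∃ i' : Fin j, i' ≠ i := by
            refine ⟨⟨if (i:ℕ) = 0 then 1 else 0, by split_ifs <;> omega⟩, ?_⟩
            simp only [ne_eq, Fin.ext_iff]
            split_ifs with h <;> omega
          obtain ⟨i', hii⟩ := hex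
          have h1 : s i + s i' ≤ ∑ i'', s i'' := by
            rw [← Finset.add_sum_erase _ s (Finset.mem_univ i)]
            exact Nat.add_le_add_left (Finset.single_le_sum (fun _ _ => Nat.zero_le _)
              (Finset.mem_erase.mpr ⟨hii, Finset.mem_univ i'⟩)) _
          have h2 := hs2 i'
          omega
        have hprod : ∏ i, a (s i)
            ≤ θ^j * (∏ i, ((s i).factorial:ℝ)) * E^N * ∏ i, (((s i:ℕ):ℝ)^2)⁻¹ := by
          have step : ∏ i, a (s i)
              ≤ ∏ i, (θ * ((s i).factorial:ℝ) * E^(s i) * (((s i:ℕ):ℝ)^2)⁻¹) := by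
            apply Finset.prod_le_prod (fun i _ => ha0 (s i))
            intro i _
            have h := ih (s i) (hlt i) (hs2 i)
            calc a (s i) ≤ θ * ((s i).factorial:ℝ) * E^(s i) / ((s i:ℕ):ℝ)^2 := h
              _ = θ * ((s i).factorial:ℝ) * E^(s i) * (((s i:ℕ):ℝ)^2)⁻¹ := by
                  rw [div_eq_mul_inv]
          refine step.trans_eq ?_
          rw [Finset.prod_mul_distrib, Finset.prod_mul_distrib, Finset.prod_mul_distrib,
            Finset.prod_const, Finset.card_univ, Fintype.card_fin,
            Finset.prod_pow_eq_pow_sum, hs1]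
        calc ((N.factorial : ℝ) / ∏ i, ((s i).factorial : ℝ)) * (j.factorial : ℝ) * C ^ j *
                ∏ i, a (s i)
            ≤ ((N.factorial : ℝ) / ∏ i, ((s i).factorial : ℝ)) * (j.factorial : ℝ) * C ^ j *
                (θ^j * (∏ i, ((s i).factorial:ℝ)) * E^N * ∏ i, (((s i:ℕ):ℝ)^2)⁻¹) :=
              mul_le_mul_of_nonneg_left hprod (by positivity)
          _ = (((N.factorial:ℝ) * (j.factorial:ℝ) * C^j * θ^j * E^N) *
                ∏ i, (((s i:ℕ):ℝ)^2)⁻¹) *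
                ((∏ i, ((s i).factorial:ℝ))⁻¹ * ∏ i, ((s i).factorial:ℝ)) := by
              rw [div_eq_mul_inv]
              ring
          _ = ((N.factorial:ℝ) * (j.factorial:ℝ) * C^j * θ^j * E^N) *
                ∏ i, (((s i:ℕ):ℝ)^2)⁻¹ := by
              rw [inv_mul_cancel₀ hPpos.ne', mul_one]
      have hQ : ∑ s ∈ (Finset.Nat.antidiagonalTuple j N).filter (fun s => ∀ i, 1 ≤ s i),
          ∏ i, (((s i:ℕ):ℝ)^2)⁻¹ ≤ 16^(j-1) / (N:ℝ)^2 :=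
        tuple_bound' j N (by omega) hN
      have hsum : ∑ s ∈ (Finset.Nat.antidiagonalTuple j N).filter (fun s => ∀ i, 1 ≤ s i),
          ((N.factorial : ℝ) / ∏ i, ((s i).factorial : ℝ)) * (j.factorial : ℝ) * C ^ j *
            ∏ i, a (s i)
          ≤ ((N.factorial:ℝ)*(j.factorial:ℝ)*C^j*θ^j*E^N) * (16^(j-1)/(N:ℝ)^2) := by
        calc ∑ s ∈ (Finset.Nat.antidiagonalTuple j N).filter (fun s => ∀ i, 1 ≤ s i),
            ((N.factorial : ℝ) / ∏ i, ((s i).factorial : ℝ)) * (j.factorial : ℝ) * C ^ j *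
              ∏ i, a (s i)
            ≤ ∑ s ∈ (Finset.Nat.antidiagonalTuple j N).filter (fun s => ∀ i, 1 ≤ s i),
              ((N.factorial:ℝ) * (j.factorial:ℝ) * C^j * θ^j * E^N) *
                ∏ i, (((s i:ℕ):ℝ)^2)⁻¹ := Finset.sum_le_sum hs_bound
          _ = ((N.factorial:ℝ) * (j.factorial:ℝ) * C^j * θ^j * E^N) *
              ∑ s ∈ (Finset.Nat.antidiagonalTuple j N).filter (fun s => ∀ i, 1 ≤ s i),
                ∏ i, (((s i:ℕ):ℝ)^2)⁻¹ := by rw [Finset.mul_sum]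
          _ ≤ ((N.factorial:ℝ)*(j.factorial:ℝ)*C^j*θ^j*E^N) * (16^(j-1)/(N:ℝ)^2) :=
              mul_le_mul_of_nonneg_left hQ (by positivity)
      calc ((j.factorial:ℝ))⁻¹ * C *
            ∑ s ∈ (Finset.Nat.antidiagonalTuple j N).filter (fun s => ∀ i, 1 ≤ s i),
              ((N.factorial : ℝ) / ∏ i, ((s i).factorial : ℝ)) * (j.factorial : ℝ) * C ^ j *
                ∏ i, a (s i)
          ≤ ((j.factorial:ℝ))⁻¹ * C *
              (((N.factorial:ℝ)*(j.factorial:ℝ)*C^j*θ^j*E^N) * (16^(j-1)/(N:ℝ)^2)) :=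
            mul_le_mul_of_nonneg_left hsum (by positivity)
        _ = (C/16) * (16*C*θ)^j * ((N.factorial:ℝ) * E^N / (N:ℝ)^2) := by
            obtain ⟨m, rfl⟩ : ∃ m, j = m+2 := ⟨j-2, by omega⟩
            have hfac : ((m+2).factorial:ℝ) ≠ 0 := by
              exact_mod_cast (Nat.factorial_pos (m+2)).ne'
            have h16 : (16:ℝ)^(m+2-1) = 16^(m+1) := by norm_num
            rw [h16]
            field_simp
            ring
    have hSpart : (∑ j ∈ Finset.Icc 2 N, ((j.factorial:ℝ))⁻¹ * C *
          ∑ s ∈ (Finset.Nat.antidiagonalTuple j N).filter (fun s => ∀ i, 1 ≤ s i),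
            ((N.factorial : ℝ) / ∏ i, ((s i).factorial : ℝ)) * (j.factorial : ℝ) * C ^ j *
              ∏ i, a (s i))
        ≤ θ/2 * ((N.factorial:ℝ) * E^N / (N:ℝ)^2) := by
      have hX : (0:ℝ) ≤ (N.factorial:ℝ) * E^N / (N:ℝ)^2 := by positivity
      have hgeom := geom_bound (16*C*θ) (by positivity) hr2 N
      have h64 : 64*C^3*θ ≤ 1 := by
        have := mul_le_mul_of_nonneg_left hθ1 (by positivity : (0:ℝ) ≤ 64*C^3)
        have e : 64*C^3*(64*C^3)⁻¹ = 1 := by field_simp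
        linarith
      calc (∑ j ∈ Finset.Icc 2 N, ((j.factorial:ℝ))⁻¹ * C *
            ∑ s ∈ (Finset.Nat.antidiagonalTuple j N).filter (fun s => ∀ i, 1 ≤ s i),
              ((N.factorial : ℝ) / ∏ i, ((s i).factorial : ℝ)) * (j.factorial : ℝ) * C ^ j *
                ∏ i, a (s i))
          ≤ ∑ j ∈ Finset.Icc 2 N,
              (C/16) * (16*C*θ)^j * ((N.factorial:ℝ) * E^N / (N:ℝ)^2) :=
            Finset.sum_le_sum hterm
        _ = (C/16) * ((N.factorial:ℝ) * E^N / (N:ℝ)^2) * ∑ j ∈ Finset.Icc 2 N, (16*C*θ)^j := by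
            rw [Finset.mul_sum]
            apply Finset.sum_congr rfl
            intro j _
            ring
        _ ≤ (C/16) * ((N.factorial:ℝ) * E^N / (N:ℝ)^2) * (2*(16*C*θ)^2) :=
            mul_le_mul_of_nonneg_left hgeom (by positivity)
        _ ≤ θ/2 * ((N.factorial:ℝ) * E^N / (N:ℝ)^2) := by
            rw [← sub_nonneg]
            have expand : θ/2 * ((N.factorial:ℝ) * E^N / (N:ℝ)^2)
                - (C/16) * ((N.factorial:ℝ) * E^N / (N:ℝ)^2) * (2*(16*C*θ)^2)
                = ((N.factorial:ℝ) * E^N / (N:ℝ)^2) * (θ/2 - 32*C^3*θ^2) := by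
              ring
            rw [expand]
            apply mul_nonneg hX
            nlinarith
    have hfinal := hrec N hN
    have e2 : θ * (N.factorial:ℝ) * E^N / (N:ℝ)^2
        = θ/2 * ((N.factorial:ℝ) * E^N / (N:ℝ)^2) + θ/2 * ((N.factorial:ℝ) * E^N / (N:ℝ)^2) := by
      ring
    rw [e2]
    linarith
  intro N hN
  have h := main N hN
  have hN0 : (0:ℝ) < (N:ℝ) := by exact_mod_cast hN
  have hN1 : (1:ℝ) ≤ (N:ℝ) := by exact_mod_cast hN
  have hsq : (1:ℝ) ≤ (N:ℝ)^2 := by nlinarith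
  calc a N ≤ θ * N.factorial * E^N / (N:ℝ)^2 := h
    _ ≤ θ * N.factorial * E^N := by
        apply div_le_self (by positivity) hsq
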